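/- Suppose for finite index sets T_H (coarse mesh) and T_h (fine mesh) and nonnegative functions η_H on T_H, η_h on T_h there hold: stability η_h(T_h ∩ T_H) ≤ η_H(T_h ∩ T_H) + S and reduction η_h(T_h \ T_H)² ≤ q η_H(T_H \ T_h)² + R, where 0 < q < 1 and S, R ≥ 0 and η(U) := (Σ_{t∈U} η(t)²)^{1/2}. Then η_h(T_h)² ≤ 2 η_H(T_H)² + R + 2S². -/
import Mathlib


theorem stmt_6 {ι : Type*} [DecidableEq ι] (TH Th : Finset ι)
    (ηH ηh : ι → ℝ) (q S R : ℝ)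
    (hηH : ∀ t ∈ TH, 0 ≤ ηH t) (hηh : ∀ t ∈ Th, 0 ≤ ηh t)
    (hq0 : 0 < q) (hq1 : q < 1) (hS : 0 ≤ S) (hR : 0 ≤ R)
    (hstab : Real.sqrt (∑ t ∈ Th ∩ TH, ηh t ^ 2)
      ≤ Real.sqrt (∑ t ∈ Th ∩ TH, ηH t ^ 2) + S)
    (hred : ∑ t ∈ Th \ TH, ηh t ^ 2 ≤ q * ∑ t ∈ TH \ Th, ηH t ^ 2 + R) :
    ∑ t ∈ Th, ηh t ^ 2 ≤ 2 * ∑ t ∈ TH, ηH t ^ 2 + R + 2 * S ^ 2 := by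
  set a : ℝ := ∑ t ∈ Th ∩ TH, ηH t ^ 2 with ha
  set b : ℝ := ∑ t ∈ TH \ Th, ηH t ^ 2 with hb
  set c : ℝ := ∑ t ∈ Th ∩ TH, ηh t ^ 2 with hc
  have ha0 : 0 ≤ a := Finset.sum_nonneg fun t _ => sq_nonneg _
  have hb0 : 0 ≤ b := Finset.sum_nonneg fun t _ => sq_nonneg _
  have hc0 : 0 ≤ c := Finset.sum_nonneg fun t _ => sq_nonneg _
  -- c ≤ (√a + S)² ≤ 2a + 2S²
  have hcle : c ≤ 2 * a + 2 * S ^ 2 := by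
    have h1 : c ≤ (Real.sqrt a + S) ^ 2 := by
      have := pow_le_pow_left₀ (Real.sqrt_nonneg c) hstab 2
      rwa [Real.sq_sqrt hc0] at this
    have h2 : (Real.sqrt a + S) ^ 2 ≤ 2 * a + 2 * S ^ 2 := by
      nlinarith [Real.sq_sqrt ha0, sq_nonneg (Real.sqrt a - S)]
    linarith
  have hsplitTh : ∑ t ∈ Th, ηh t ^ 2 = c + ∑ t ∈ Th \ TH, ηh t ^ 2 := by
    rw [hc, ← Finset.sum_inter_add_sum_sdiff Th TH fun t => ηh t ^ 2]
  have hsplitTH : ∑ t ∈ TH, ηH t ^ 2 = a + b := by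
    rw [ha, hb, Finset.inter_comm Th TH,
      ← Finset.sum_inter_add_sum_sdiff TH Th fun t => ηH t ^ 2]
  have hqb : q * b ≤ 2 * b := by nlinarith
  linarith
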